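/- Let A and B be densely defined closable operators on a Hilbert space H with σ(AB) ≠ ℂ and σ(BA) ≠ ℂ. Then A and B are closed, AB and BA are densely defined and closed, and (AB)* = B*A* and (BA)* = A*B*; consequently (A*B*)* = BA and (B*A*)* = AB. -/

import Mathlib

open LinearPMap

set_option linter.unusedSectionVars false

noncomputable section

section BanachDefs

variable {H : Type*} [NormedAddCommGroup H] [NormedSpace ℂ H]

/-- Composition `g ∘ f` of unbounded operators, with the natural (maximal) domain
`{x ∈ dom f : f x ∈ dom g}`. -/
def LinearPMap.pComp (g f : H →ₗ.[ℂ] H) : H →ₗ.[ℂ] H where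
  domain := (g.domain.comap f.toFun).map f.domain.subtype
  toFun := g.toFun ∘ₗ (f.toFun.restrict (p := g.domain.comap f.toFun) (q := g.domain)
      (fun _ hx => hx)) ∘ₗ
    ((Submodule.equivMapOfInjective f.domain.subtype (Submodule.injective_subtype _)
      (g.domain.comap f.toFun)).symm).toLinearMap

/-- `n`-th power of an unbounded operator; `T^0` is the identity on all of `H`. -/
def LinearPMap.pPow (T : H →ₗ.[ℂ] H) : ℕ → (H →ₗ.[ℂ] H)
  | 0 => (LinearMap.id : H →ₗ[ℂ] H).toPMap ⊤
  | n + 1 => T.pComp (T.pPow n)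

theorem LinearPMap.pPow_domain_succ_le (T : H →ₗ.[ℂ] H) (n : ℕ) :
    (T.pPow (n + 1)).domain ≤ (T.pPow n).domain := by
  intro x hx
  simp_rw [pPow, pComp] at hx
  obtain ⟨y, -, rfl⟩ := hx
  exact y.2

theorem LinearPMap.pPow_domain_le (T : H →ₗ.[ℂ] H) {i n : ℕ} (h : i ≤ n) :
    (T.pPow n).domain ≤ (T.pPow i).domain := by
  induction n with
  | zero => exact Nat.le_zero.mp h ▸ le_rfl
  | succ n ih =>
    rcases Nat.lt_succ_iff_lt_or_eq.mp (Nat.lt_succ_of_le h) with h' | rfl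
    · exact le_trans (T.pPow_domain_succ_le n) (ih (Nat.lt_succ_iff.mp h'))
    · exact le_rfl

/-- `p(T)` for a complex polynomial `p`, defined on `D(T^n)` where `n = deg p`. -/
def LinearPMap.polyApp (p : Polynomial ℂ) (T : H →ₗ.[ℂ] H) : H →ₗ.[ℂ] H where
  domain := (T.pPow p.natDegree).domain
  toFun := ∑ i ∈ (Finset.range (p.natDegree + 1)).attach,
    p.coeff i.1 • ((T.pPow i.1).toFun ∘ₗ Submodule.inclusion
      (T.pPow_domain_le (Nat.lt_succ_iff.mp (Finset.mem_range.mp i.2))))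

/-- `A - μ • I` with domain `dom A`. -/
def LinearPMap.subConst (A : H →ₗ.[ℂ] H) (μ : ℂ) : H →ₗ.[ℂ] H :=
  ⟨A.domain, A.toFun - μ • A.domain.subtype⟩

/-- An unbounded operator is boundedly invertible if it is bijective from its domain onto `H`
with an everywhere-defined bounded (continuous) inverse. -/
def LinearPMap.IsBddInvertible (A : H →ₗ.[ℂ] H) : Prop :=
  ∃ B : H →L[ℂ] H, (∀ y : H, ∃ hy : B y ∈ A.domain, A ⟨B y, hy⟩ = y) ∧
    ∀ x : A.domain, B (A x) = (x : H)

/-- The spectrum of an unbounded operator: `μ ∉ σ(A)` iff `A - μI` is bijective with a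
bounded everywhere-defined inverse. -/
def LinearPMap.pSpectrum (A : H →ₗ.[ℂ] H) : Set ℂ :=
  {μ | ¬ (A.subConst μ).IsBddInvertible}

/-- The kernel of an unbounded operator, as a subset of `H`. -/
def LinearPMap.pKer (A : H →ₗ.[ℂ] H) : Set H :=
  {x | ∃ hx : x ∈ A.domain, A ⟨x, hx⟩ = 0}

/-- The range of an unbounded operator. -/
def LinearPMap.pRan (A : H →ₗ.[ℂ] H) : Set H :=
  Set.range fun x : A.domain => A x

/-- A bounded everywhere-defined operator seen as an unbounded operator. -/
def ContinuousLinearMap.toPMapTop (B : H →L[ℂ] H) : H →ₗ.[ℂ] H :=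
  (B : H →ₗ[ℂ] H).toPMap ⊤

end BanachDefs

section HilbertDefs

variable {H : Type*} [NormedAddCommGroup H] [InnerProductSpace ℂ H] [CompleteSpace H]

/-- A densely defined closed operator is quasinormal if `T T* T = T* T T`. -/
def LinearPMap.IsQuasinormal (T : H →ₗ.[ℂ] H) : Prop :=
  T.IsClosed ∧ Dense (T.domain : Set H) ∧
    T.pComp (T.adjoint.pComp T) = T.adjoint.pComp (T.pComp T)

/-- A densely defined closed operator is normal if `T* T = T T*` (an equality of unbounded
operators, domains included). -/
def LinearPMap.IsNormal (T : H →ₗ.[ℂ] H) : Prop :=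
  T.IsClosed ∧ Dense (T.domain : Set H) ∧ T.adjoint.pComp T = T.pComp T.adjoint

/-- A symmetric (not necessarily densely defined) operator. -/
def LinearPMap.IsSymm (T : H →ₗ.[ℂ] H) : Prop :=
  ∀ x y : T.domain, inner ℂ (T x) (y : H) = (inner ℂ (x : H) (T y) : ℂ)

/-- A paranormal operator: `‖Tx‖² ≤ ‖T²x‖ ‖x‖` for every `x ∈ D(T²)`. -/
def LinearPMap.IsParanormal (T : H →ₗ.[ℂ] H) : Prop :=
  ∀ (x : H) (hx : x ∈ T.domain) (hTx : T ⟨x, hx⟩ ∈ T.domain),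
    ‖T ⟨x, hx⟩‖ ^ 2 ≤ ‖T ⟨T ⟨x, hx⟩, hTx⟩‖ * ‖x‖

end HilbertDefs

end

section Aux

variable {H : Type*} [NormedAddCommGroup H] [InnerProductSpace ℂ H] [CompleteSpace H]

open scoped InnerProductSpace

local notation "⟪" x ", " y "⟫" => @inner ℂ _ _ x y

theorem LinearPMap.mem_pComp_domain {g f : H →ₗ.[ℂ] H} {x : H} :
    x ∈ (g.pComp f).domain ↔ ∃ hx : x ∈ f.domain, f ⟨x, hx⟩ ∈ g.domain := by
  constructor
  · rintro ⟨y, hy, rfl⟩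
    exact ⟨y.2, hy⟩
  · rintro ⟨hx, hfx⟩
    exact ⟨⟨x, hx⟩, hfx, rfl⟩

theorem LinearPMap.pComp_apply {g f : H →ₗ.[ℂ] H} {x : H} (hx : x ∈ f.domain)
    (hfx : f ⟨x, hx⟩ ∈ g.domain) (h : x ∈ (g.pComp f).domain) :
    (g.pComp f) ⟨x, h⟩ = g ⟨f ⟨x, hx⟩, hfx⟩ := by
  have hsymm : (((Submodule.equivMapOfInjective f.domain.subtype (Submodule.injective_subtype _)
      (g.domain.comap f.toFun)).symm ⟨x, h⟩ : g.domain.comap f.toFun) : f.domain) = ⟨x, hx⟩ := by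
    apply Subtype.ext
    exact Submodule.map_equivMapOfInjective_symm_apply _ _ _ ⟨x, h⟩
  show g.toFun ((f.toFun.restrict (p := g.domain.comap f.toFun) (q := g.domain)
      (fun _ hx => hx)) ((Submodule.equivMapOfInjective f.domain.subtype
      (Submodule.injective_subtype _) (g.domain.comap f.toFun)).symm ⟨x, h⟩)) = g ⟨f ⟨x, hx⟩, hfx⟩
  refine congrArg g.toFun (Subtype.ext ?_)
  show f.toFun _ = _
  exact congrArg f.toFun hsymm

theorem LinearPMap.pComp_domain_le_right {g f : H →ₗ.[ℂ] H} :
    (g.pComp f).domain ≤ f.domain := by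
  rintro x ⟨y, hy, rfl⟩; exact y.2

theorem LinearPMap.subConst_apply (A : H →ₗ.[ℂ] H) (μ : ℂ) {x : H} (hx : x ∈ A.domain) :
    (A.subConst μ) ⟨x, hx⟩ = A ⟨x, hx⟩ - μ • x :=
  rfl

/-- `S` is an everywhere-defined bounded two-sided inverse of `T - l`. -/
def Res (T : H →ₗ.[ℂ] H) (l : ℂ) (S : H →L[ℂ] H) : Prop :=
  (∀ y : H, ∃ hy : S y ∈ T.domain, T ⟨S y, hy⟩ = y + l • S y) ∧
  ∀ (x : H) (hx : x ∈ T.domain), S (T ⟨x, hx⟩ - l • x) = x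

theorem res_of_isBddInvertible {T : H →ₗ.[ℂ] H} {l : ℂ}
    (h : (T.subConst l).IsBddInvertible) : ∃ S, Res T l S := by
  obtain ⟨S, h1, h2⟩ := h
  refine ⟨S, fun y => ?_, fun x hx => ?_⟩
  · obtain ⟨hy, hTy⟩ := h1 y
    refine ⟨hy, ?_⟩
    change T ⟨S y, hy⟩ - l • S y = y at hTy
    rw [sub_eq_iff_eq_add] at hTy
    rw [hTy, add_comm]
  · have := h2 ⟨x, hx⟩
    exact this

theorem Res.mem_domain {T : H →ₗ.[ℂ] H} {l : ℂ} {S : H →L[ℂ] H} (hS : Res T l S) (y : H) :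
    S y ∈ T.domain := (hS.1 y).1

theorem Res.eq_apply {T : H →ₗ.[ℂ] H} {l : ℂ} {S : H →L[ℂ] H} (hS : Res T l S) (y : H) :
    T ⟨S y, hS.mem_domain y⟩ = y + l • S y := (hS.1 y).2

/-- A linear pmap with a bounded two-sided shifted inverse is closed. -/
theorem Res.isClosed {T : H →ₗ.[ℂ] H} {l : ℂ} {S : H →L[ℂ] H} (hS : Res T l S) :
    T.IsClosed := by
  apply IsSeqClosed.isClosed
  rintro p ⟨u, v⟩ hp hlim
  have hu : Filter.Tendsto (fun n => (p n).1) Filter.atTop (nhds u) :=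
    (continuous_fst.tendsto _).comp hlim
  have hv : Filter.Tendsto (fun n => (p n).2) Filter.atTop (nhds v) :=
    (continuous_snd.tendsto _).comp hlim
  -- each p n is in the graph
  have key : ∀ n, (p n).1 = S ((p n).2 - l • (p n).1) := by
    intro n
    obtain ⟨x, hx1, hx2⟩ := T.mem_graph_iff.mp (hp n)
    rw [← hx1, ← hx2]
    exact (hS.2 x x.2).symm
  have hulim : Filter.Tendsto (fun n => S ((p n).2 - l • (p n).1)) Filter.atTop (nhds u) := by
    rw [Filter.tendsto_congr (fun n => (key n).symm)]
    exact hu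
  have hulim2 : Filter.Tendsto (fun n => S ((p n).2 - l • (p n).1)) Filter.atTop
      (nhds (S (v - l • u))) :=
    (S.continuous.tendsto _).comp (hv.sub (hu.const_smul l))
  have hueq : u = S (v - l • u) := tendsto_nhds_unique hulim hulim2
  rw [SetLike.mem_coe, LinearPMap.mem_graph_iff]
  have hmem := hS.mem_domain (v - l • u)
  refine ⟨⟨u, hueq ▸ hmem⟩, rfl, ?_⟩
  have := hS.eq_apply (v - l • u)
  have heq : T ⟨u, hueq ▸ hmem⟩ = (v - l • u) + l • S (v - l • u) := by
    rw [← this]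
    congr 1
    exact Subtype.ext hueq
  rw [heq, ← hueq]
  abel

end Aux

section Aux2

variable {H : Type*} [NormedAddCommGroup H] [InnerProductSpace ℂ H] [CompleteSpace H]

/-- Composition of a closable pmap with a bounded map landing in its domain is bounded
(closed graph theorem). -/
theorem LinearPMap.IsClosable.comp_clm {B : H →ₗ.[ℂ] H} (hcB : B.IsClosable) (S : H →L[ℂ] H)
    (hmem : ∀ x, S x ∈ B.domain) : ∃ N : H →L[ℂ] H, ∀ x, N x = B ⟨S x, hmem x⟩ := by
  classical
  let NL : H →ₗ[ℂ] H := B.toFun ∘ₗ ((S : H →ₗ[ℂ] H).codRestrict B.domain hmem)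
  have happ : ∀ x, NL x = B ⟨S x, hmem x⟩ := fun _ => rfl
  have hcont : Continuous NL := by
    apply LinearMap.continuous_of_seq_closed_graph
    intro u x y hux huy
    have h1 : Filter.Tendsto (fun n => ((S (u n) : H), NL (u n))) Filter.atTop
        (nhds (S x, y)) :=
      ((S.continuous.tendsto _).comp hux).prodMk_nhds huy
    have h2 : ∀ n, ((S (u n) : H), NL (u n)) ∈ (B.graph : Set (H × H)) := by
      intro n
      rw [happ]
      exact B.mem_graph ⟨S (u n), hmem (u n)⟩
    have h3 : (S x, y) ∈ _root_.closure (B.graph : Set (H × H)) :=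
      mem_closure_of_tendsto h1 (Filter.Eventually.of_forall h2)
    have h4 : (S x, y) ∈ B.closure.graph := by
      rw [← hcB.graph_closure_eq_closure_graph]
      exact h3
    rw [LinearPMap.mem_graph_iff] at h4
    obtain ⟨z, hz1, hz2⟩ := h4
    have hz3 : B.closure z = B ⟨S x, hmem x⟩ :=
      (B.le_closure.2 (by rw [hz1])).symm
    rw [happ, ← hz3, hz2]
  exact ⟨⟨NL, hcont⟩, happ⟩

theorem Res.shift {T : H →ₗ.[ℂ] H} {l : ℂ} {S : H →L[ℂ] H} (hS : Res T l S) (c : ℂ)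
    (hc : ‖c • S‖ < 1) : ∃ S', Res T (l - c) S' := by
  have h1 : ‖-(c • S)‖ < 1 := by rwa [norm_neg]
  let u : (H →L[ℂ] H)ˣ := Units.oneSub (-(c • S)) h1
  have huval : (u : H →L[ℂ] H) = 1 + c • S := by
    show (1 : H →L[ℂ] H) - -(c • S) = 1 + c • S
    rw [sub_neg_eq_add]
  set V : H →L[ℂ] H := ↑u⁻¹ with hV
  have hcomm : (u : H →L[ℂ] H) * S = S * (u : H →L[ℂ] H) := by
    rw [huval, add_mul, mul_add, one_mul, mul_one, smul_mul_assoc, mul_smul_comm]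
  have hcomm' : V * S = S * V :=
    ((Commute.units_inv_right hcomm.symm).symm).eq
  have hcommf : ∀ w, V (S w) = S (V w) := by
    intro w
    have h2 := congrFun (congrArg (DFunLike.coe) hcomm') w
    simpa [ContinuousLinearMap.mul_apply] using h2
  have huv : ∀ w, V w + c • S (V w) = w := by
    intro w
    have h0 : ((u : H →L[ℂ] H) * V) w = w := by rw [hV, Units.mul_inv]; rfl
    calc V w + c • S (V w) = ((1 + c • S) : H →L[ℂ] H) (V w) := by
          rw [ContinuousLinearMap.add_apply, ContinuousLinearMap.smul_apply,
            ContinuousLinearMap.one_apply]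
    _ = ((u : H →L[ℂ] H) * V) w := by rw [huval]; rfl
    _ = w := h0
  refine ⟨S.comp V, fun y => ?_, fun x hx => ?_⟩
  · obtain ⟨hz, hTz⟩ := hS.1 (V y)
    refine ⟨hz, ?_⟩
    show T ⟨S (V y), hz⟩ = y + (l - c) • S (V y)
    rw [hTz]
    calc V y + l • S (V y) = (V y + c • S (V y)) + (l - c) • S (V y) := by
          rw [sub_smul]; abel
    _ = y + (l - c) • S (V y) := by rw [huv y]
  · show S (V (T ⟨x, hx⟩ - (l - c) • x)) = x
    have e1 : T ⟨x, hx⟩ - (l - c) • x = (T ⟨x, hx⟩ - l • x) + c • x := by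
      rw [sub_smul]; abel
    rw [← hcommf, e1, _root_.map_add, _root_.map_smul, hS.2 x hx, _root_.map_add, _root_.map_smul, hcommf]
    exact huv x

/-- From a non-full spectrum, extract a nonzero resolvent point. -/
theorem exists_res_ne_zero {T : H →ₗ.[ℂ] H} (h : T.pSpectrum ≠ Set.univ) :
    ∃ (l : ℂ) (S : H →L[ℂ] H), l ≠ 0 ∧ Res T l S := by
  obtain ⟨l₀, hl₀⟩ := (Set.ne_univ_iff_exists_notMem _).mp h
  have hinv : (T.subConst l₀).IsBddInvertible := not_not.mp hl₀
  obtain ⟨S₀, hS₀⟩ := res_of_isBddInvertible hinv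
  by_cases hl : l₀ = 0
  · subst hl
    set ε : ℝ := (2 * (‖S₀‖ + 1))⁻¹ with hε
    have hεpos : 0 < ε := by positivity
    have hnorm : ‖(-(ε : ℂ)) • S₀‖ < 1 := by
      have h2 : ‖(-(ε : ℂ))‖ = ε := by
        rw [norm_neg, Complex.norm_real, Real.norm_of_nonneg hεpos.le]
      calc ‖(-(ε : ℂ)) • S₀‖ = ε * ‖S₀‖ := by
            rw [norm_smul (α := ℂ) (-(ε : ℂ)) S₀, h2]
      _ < 1 := by
          rw [hε, inv_mul_lt_iff₀ (by positivity), mul_one]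
          nlinarith [norm_nonneg S₀]
    obtain ⟨S', hS'⟩ := hS₀.shift (-(ε : ℂ)) hnorm
    refine ⟨0 - -(ε : ℂ), S', ?_, hS'⟩
    simp only [zero_sub, neg_neg, ne_eq, Complex.ofReal_eq_zero]
    exact ne_of_gt hεpos
  · exact ⟨l₀, S₀, hl, hS₀⟩

end Aux2

section Aux3

variable {H : Type*} [NormedAddCommGroup H] [InnerProductSpace ℂ H] [CompleteSpace H]

theorem LinearPMap.apply_congr (A : H →ₗ.[ℂ] H) {x y : H} (h : x ∈ A.domain)
    (h' : y ∈ A.domain) (e : x = y) : A ⟨x, h⟩ = A ⟨y, h'⟩ := by subst e; rfl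

theorem LinearPMap.apply_add_smul (A : H →ₗ.[ℂ] H) {u v : H} (hu : u ∈ A.domain)
    (hv : v ∈ A.domain) (c : ℂ) (h : u + c • v ∈ A.domain) :
    A ⟨u + c • v, h⟩ = A ⟨u, hu⟩ + c • A ⟨v, hv⟩ := by
  have he : (⟨u + c • v, h⟩ : A.domain) = ⟨u, hu⟩ + c • ⟨v, hv⟩ := by
    apply Subtype.ext; rfl
  rw [he, A.map_add, A.map_smul]

theorem LinearPMap.apply_sub (A : H →ₗ.[ℂ] H) {u v : H} (hu : u ∈ A.domain)
    (hv : v ∈ A.domain) (h : u - v ∈ A.domain) :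
    A ⟨u - v, h⟩ = A ⟨u, hu⟩ - A ⟨v, hv⟩ := by
  have he : (⟨u - v, h⟩ : A.domain) = ⟨u, hu⟩ - ⟨v, hv⟩ := by
    apply Subtype.ext; rfl
  rw [he, A.map_sub]

theorem LinearPMap.apply_smulc (A : H →ₗ.[ℂ] H) {v : H} (hv : v ∈ A.domain) (c : ℂ)
    (h : c • v ∈ A.domain) : A ⟨c • v, h⟩ = c • A ⟨v, hv⟩ := by
  have he : (⟨c • v, h⟩ : A.domain) = c • ⟨v, hv⟩ := by
    apply Subtype.ext; rfl
  rw [he, A.map_smul]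

theorem LinearPMap.pComp_mem_snd {A B : H →ₗ.[ℂ] H} {x : H}
    (h : x ∈ (A.pComp B).domain) (h1 : x ∈ B.domain) : B ⟨x, h1⟩ ∈ A.domain := by
  obtain ⟨h1', h2⟩ := LinearPMap.mem_pComp_domain.mp h
  exact h2

variable {A B : H →ₗ.[ℂ] H} {l m : ℂ} {S R : H →L[ℂ] H}

/-- `R y ∈ D(A)` when `R` maps into `D(BA)`. -/
theorem Res.memA (hR : Res (B.pComp A) m R) (y : H) : R y ∈ A.domain :=
  LinearPMap.pComp_domain_le_right (hR.mem_domain y)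

/-- Identity (I1): for `u ∈ D(A)`, `A R u ∈ D(AB)` and `(AB)(ARu) = Au + m • ARu`. -/
theorem resI1 (hR : Res (B.pComp A) m R) {u : H} (hu : u ∈ A.domain) :
    ∃ hM : (A ⟨R u, hR.memA u⟩ : H) ∈ (A.pComp B).domain,
      (A.pComp B) ⟨A ⟨R u, hR.memA u⟩, hM⟩ = A ⟨u, hu⟩ + m • A ⟨R u, hR.memA u⟩ := by
  have hmem := hR.mem_domain u
  have h1 : R u ∈ A.domain := hR.memA u
  have h2 : (A ⟨R u, h1⟩ : H) ∈ B.domain := LinearPMap.pComp_mem_snd hmem h1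
  have heq : B ⟨A ⟨R u, h1⟩, h2⟩ = u + m • R u := by
    rw [← LinearPMap.pComp_apply h1 h2 hmem]
    exact hR.eq_apply u
  have h3 : u + m • R u ∈ A.domain := add_mem hu (Submodule.smul_mem _ _ h1)
  have h4 : (B ⟨A ⟨R u, h1⟩, h2⟩ : H) ∈ A.domain := heq ▸ h3
  have hM : (A ⟨R u, h1⟩ : H) ∈ (A.pComp B).domain :=
    LinearPMap.mem_pComp_domain.mpr ⟨h2, h4⟩
  refine ⟨hM, ?_⟩
  rw [LinearPMap.pComp_apply h2 h4 hM]
  rw [A.apply_congr h4 h3 heq]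
  exact A.apply_add_smul hu h1 m h3

/-- Identity (I2): for `x ∈ D(B)`, `A R B x - x ∈ D(AB)` and `(AB)(ARBx - x) = m • ARBx`. -/
theorem resI2 (hR : Res (B.pComp A) m R) {x : H} (hx : x ∈ B.domain) :
    ∃ h : (A ⟨R (B ⟨x, hx⟩), hR.memA _⟩ : H) - x ∈ (A.pComp B).domain,
      (A.pComp B) ⟨(A ⟨R (B ⟨x, hx⟩), hR.memA _⟩ : H) - x, h⟩
        = m • A ⟨R (B ⟨x, hx⟩), hR.memA _⟩ := by
  set b : H := B ⟨x, hx⟩ with hb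
  have hmem := hR.mem_domain b
  have h1 : R b ∈ A.domain := hR.memA b
  have h2 : (A ⟨R b, h1⟩ : H) ∈ B.domain := LinearPMap.pComp_mem_snd hmem h1
  have heq : B ⟨A ⟨R b, h1⟩, h2⟩ = b + m • R b := by
    rw [← LinearPMap.pComp_apply h1 h2 hmem]
    exact hR.eq_apply b
  have hw : (A ⟨R b, h1⟩ : H) - x ∈ B.domain := sub_mem h2 hx
  have hBw : B ⟨(A ⟨R b, h1⟩ : H) - x, hw⟩ = m • R b := by
    rw [B.apply_sub h2 hx, heq, hb]
    abel
  have hmRb : m • R b ∈ A.domain := Submodule.smul_mem _ _ h1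
  have hBw' : (B ⟨(A ⟨R b, h1⟩ : H) - x, hw⟩ : H) ∈ A.domain := hBw ▸ hmRb
  have hM : (A ⟨R b, h1⟩ : H) - x ∈ (A.pComp B).domain :=
    LinearPMap.mem_pComp_domain.mpr ⟨hw, hBw'⟩
  refine ⟨hM, ?_⟩
  rw [LinearPMap.pComp_apply hw hBw' hM]
  rw [A.apply_congr hBw' hmRb hBw]
  exact A.apply_smulc h1 m hmRb

/-- Identity (I3): for `u ∈ D(A)`, `q := l⁻¹ • (B S A u - u) ∈ D(BA)`, `A q = S A u` and
`(BA) q = u + l • q`. -/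
theorem resI3 (hS : Res (A.pComp B) l S) (hl : l ≠ 0) {u : H} (hu : u ∈ A.domain) :
    ∃ hq : l⁻¹ • ((B ⟨S (A ⟨u, hu⟩), LinearPMap.pComp_domain_le_right
        (hS.mem_domain _)⟩ : H) - u) ∈ (B.pComp A).domain,
      (A ⟨_, LinearPMap.pComp_domain_le_right hq⟩ = S (A ⟨u, hu⟩)) ∧
      (B.pComp A) ⟨_, hq⟩ = u + l • (l⁻¹ • ((B ⟨S (A ⟨u, hu⟩),
        LinearPMap.pComp_domain_le_right (hS.mem_domain _)⟩ : H) - u)) := by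
  set a : H := A ⟨u, hu⟩ with ha
  have hy := hS.mem_domain a
  have hy1 : S a ∈ B.domain := LinearPMap.pComp_domain_le_right hy
  have hy2 : (B ⟨S a, hy1⟩ : H) ∈ A.domain := LinearPMap.pComp_mem_snd hy hy1
  have heq : A ⟨B ⟨S a, hy1⟩, hy2⟩ = a + l • S a := by
    rw [← LinearPMap.pComp_apply hy1 hy2 hy]
    exact hS.eq_apply a
  set q : H := l⁻¹ • ((B ⟨S a, hy1⟩ : H) - u) with hqdef
  have hq' : l⁻¹ • ((B ⟨S a, hy1⟩ : H) - u) ∈ A.domain :=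
    Submodule.smul_mem _ _ (sub_mem hy2 hu)
  have hqA : q ∈ A.domain := hq'
  have hAq : A ⟨q, hqA⟩ = S a := by
    rw [A.apply_congr hqA hq' hqdef]
    rw [A.apply_smulc (sub_mem hy2 hu) _ hq', A.apply_sub hy2 hu, heq, ← ha]
    rw [show a + l • S a - a = l • S a by abel]
    rw [smul_smul, inv_mul_cancel₀ hl, one_smul]
  have hAqB : (A ⟨q, hqA⟩ : H) ∈ B.domain := by rw [hAq]; exact hy1
  have hq : q ∈ (B.pComp A).domain := LinearPMap.mem_pComp_domain.mpr ⟨hqA, hAqB⟩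
  refine ⟨hq, ?_, ?_⟩
  · exact hAq
  · rw [LinearPMap.pComp_apply hqA hAqB hq]
    have h5 : B ⟨A ⟨q, hqA⟩, hAqB⟩ = B ⟨S a, hy1⟩ := by
      apply B.apply_congr _ _ hAq
    rw [h5]
    have h6 : l • q = (B ⟨S a, hy1⟩ : H) - u := by
      rw [hqdef, smul_smul, mul_inv_cancel₀ hl, one_smul]
    rw [h6]
    abel

end Aux3

section Aux4

variable {H : Type*} [NormedAddCommGroup H] [InnerProductSpace ℂ H] [CompleteSpace H]

local notation "⟪" x ", " y "⟫" => @inner ℂ _ _ x y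

variable {A B : H →ₗ.[ℂ] H} {l m : ℂ} {S R : H →L[ℂ] H}

/-- Density of `D(AB)`. -/
theorem dense_comp (hdA : Dense (A.domain : Set H)) (hdB : Dense (B.domain : Set H))
    (hcA : A.IsClosable) (hR : Res (B.pComp A) m R) :
    Dense (((A.pComp B).domain : Submodule ℂ H) : Set H) := by
  obtain ⟨M, hM⟩ := hcA.comp_clm R hR.memA
  rw [Submodule.dense_iff_topologicalClosure_eq_top, Submodule.topologicalClosure_eq_top_iff,
    Submodule.eq_bot_iff]
  intro z hz
  have hzperp : ∀ u ∈ (A.pComp B).domain, ⟪u, z⟫ = 0 :=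
    (Submodule.mem_orthogonal _ z).mp hz
  have hMz : ContinuousLinearMap.adjoint M z = 0 := by
    refine hdA.eq_zero_of_inner_left (𝕜 := ℂ) (fun v hv => ?_)
    lift v to A.domain using hv
    rw [ContinuousLinearMap.adjoint_inner_left]
    obtain ⟨hmem, -⟩ := resI1 hR v.2
    have h0 : ⟪(A ⟨R ↑v, hR.memA ↑v⟩ : H), z⟫ = 0 := hzperp _ hmem
    rw [hM ↑v, ← inner_conj_symm, h0]
    exact RingHom.map_zero _
  have hBz : ∀ v : B.domain, ⟪z, (v : H)⟫ = 0 := by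
    intro v
    obtain ⟨hmem, -⟩ := resI2 hR v.2
    have h0 : ⟪(A ⟨R (B ⟨↑v, v.2⟩), hR.memA _⟩ : H) - ↑v, z⟫ = 0 := hzperp _ hmem
    rw [inner_sub_left, ← hM] at h0
    have h1 : ⟪M (B ⟨↑v, v.2⟩), z⟫ = 0 := by
      rw [← ContinuousLinearMap.adjoint_inner_right, hMz, inner_zero_right]
    rw [h1, zero_sub, neg_eq_zero] at h0
    rw [← inner_conj_symm, h0]
    exact RingHom.map_zero _
  exact hdB.eq_zero_of_inner_left (𝕜 := ℂ) (fun v hv => hBz ⟨v, hv⟩)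

/-- Closedness of `A`. -/
theorem closed_left (hcA : A.IsClosable) (hcB : B.IsClosable)
    (hS : Res (A.pComp B) l S) (hR : Res (B.pComp A) m R) (hl : l ≠ 0) :
    A.IsClosed := by
  have hSB : ∀ y, S y ∈ B.domain := fun y => LinearPMap.pComp_domain_le_right (hS.mem_domain y)
  obtain ⟨N, hN⟩ := hcB.comp_clm S hSB
  have hBA : (B.pComp A).IsClosed := hR.isClosed
  apply IsSeqClosed.isClosed
  rintro p ⟨u, v⟩ hp hlim
  have hu : Filter.Tendsto (fun n => (p n).1) Filter.atTop (nhds u) :=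
    (continuous_fst.tendsto _).comp hlim
  have hv : Filter.Tendsto (fun n => (p n).2) Filter.atTop (nhds v) :=
    (continuous_snd.tendsto _).comp hlim
  choose x hx1 hx2 using fun n => A.mem_graph_iff.mp (hp n)
  have hqall := fun n => resI3 hS hl (x n).2
  choose hq hAq hBAq using hqall
  set f : ℕ → H := fun n => l⁻¹ • ((B ⟨S (A ⟨↑(x n), (x n).2⟩), LinearPMap.pComp_domain_le_right
      (hS.mem_domain _)⟩ : H) - ↑(x n)) with hf
  have hxu : Filter.Tendsto (fun n => (↑(x n) : H)) Filter.atTop (nhds u) := by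
    refine hu.congr fun n => ?_
    exact (hx1 n).symm
  have hAx : Filter.Tendsto (fun n => (A ⟨↑(x n), (x n).2⟩ : H)) Filter.atTop (nhds v) := by
    refine hv.congr fun n => ?_
    exact (hx2 n).symm
  set qlim : H := l⁻¹ • (N v - u) with hqlim
  have htend : Filter.Tendsto f Filter.atTop (nhds qlim) := by
    have h1 : Filter.Tendsto (fun n => l⁻¹ • (N (A ⟨↑(x n), (x n).2⟩) - ↑(x n)))
        Filter.atTop (nhds (l⁻¹ • (N v - u))) :=
      (((N.continuous.tendsto v).comp hAx).sub hxu).const_smul l⁻¹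
    refine h1.congr fun n => ?_
    rw [hf]
    simp only []
    rw [hN]
  -- (qlim, u + l • qlim) is in the (closed) graph of BA
  have hmemBA : ∀ n, (f n, (↑(x n) : H) + l • f n) ∈ ((B.pComp A).graph : Set (H × H)) := by
    intro n
    rw [← hBAq n]
    exact (B.pComp A).mem_graph ⟨f n, hq n⟩
  have htendBA : Filter.Tendsto (fun n => (f n, (↑(x n) : H) + l • f n)) Filter.atTop
      (nhds (qlim, u + l • qlim)) :=
    htend.prodMk_nhds (hxu.add (htend.const_smul l))
  have hinBA : (qlim, u + l • qlim) ∈ (B.pComp A).graph := by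
    have := hBA.mem_of_tendsto htendBA (Filter.Eventually.of_forall hmemBA)
    exact this
  obtain ⟨w, hw1', hw2'⟩ := (B.pComp A).mem_graph_iff.mp hinBA
  have hw1 : (w : H) = qlim := hw1'
  have hw2 : (B.pComp A) w = u + l • qlim := hw2'
  -- (qlim, S v) is in the closure of the graph of A
  have hmemA : ∀ n, (f n, S (A ⟨↑(x n), (x n).2⟩)) ∈ (A.graph : Set (H × H)) := by
    intro n
    rw [← hAq n]
    exact A.mem_graph ⟨f n, LinearPMap.pComp_domain_le_right (hq n)⟩
  have htendA : Filter.Tendsto (fun n => (f n, S (A ⟨↑(x n), (x n).2⟩))) Filter.atTop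
      (nhds (qlim, S v)) :=
    htend.prodMk_nhds ((S.continuous.tendsto v).comp hAx)
  have hinA : (qlim, S v) ∈ A.closure.graph := by
    rw [← hcA.graph_closure_eq_closure_graph]
    exact mem_closure_of_tendsto htendA (Filter.Eventually.of_forall hmemA)
  obtain ⟨zc, hzc1', hzc2'⟩ := A.closure.mem_graph_iff.mp hinA
  have hzc1 : (zc : H) = qlim := hzc1'
  have hzc2 : A.closure zc = S v := hzc2'
  -- extract data
  have hqinfBA : qlim ∈ (B.pComp A).domain := hw1 ▸ w.2
  have hqinfA : qlim ∈ A.domain := LinearPMap.pComp_domain_le_right hqinfBA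
  have hAqinf : A ⟨qlim, hqinfA⟩ = S v := by
    rw [← hzc2]
    exact A.le_closure.2 (by rw [hzc1])
  have hSv_mem := hS.mem_domain v
  have hSvB : S v ∈ B.domain := hSB v
  have hBSvA : (B ⟨S v, hSvB⟩ : H) ∈ A.domain := LinearPMap.pComp_mem_snd hSv_mem hSvB
  have hAqinfB : (A ⟨qlim, hqinfA⟩ : H) ∈ B.domain := by rw [hAqinf]; exact hSvB
  have key : u + l • qlim = B ⟨S v, hSvB⟩ := by
    have h3 : (⟨qlim, hqinfBA⟩ : (B.pComp A).domain) = w := Subtype.ext hw1.symm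
    rw [← hw2, ← h3, LinearPMap.pComp_apply hqinfA hAqinfB hqinfBA]
    exact B.apply_congr hAqinfB hSvB hAqinf
  have hueq : u = (B ⟨S v, hSvB⟩ : H) - l • qlim := by rw [← key]; abel
  have hu_mem : u ∈ A.domain := by
    rw [hueq]; exact sub_mem hBSvA (Submodule.smul_mem _ _ hqinfA)
  have hABSv : A ⟨B ⟨S v, hSvB⟩, hBSvA⟩ = v + l • S v := by
    rw [← LinearPMap.pComp_apply hSvB hBSvA hSv_mem]
    exact hS.eq_apply v
  have hvalue : A ⟨u, hu_mem⟩ = v := by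
    rw [A.apply_congr hu_mem (sub_mem hBSvA (Submodule.smul_mem _ _ hqinfA)) hueq]
    rw [A.apply_sub hBSvA (Submodule.smul_mem _ _ hqinfA),
      A.apply_smulc hqinfA l (Submodule.smul_mem _ _ hqinfA), hAqinf, hABSv]
    abel
  rw [SetLike.mem_coe, LinearPMap.mem_graph_iff]
  exact ⟨⟨u, hu_mem⟩, rfl, hvalue⟩

end Aux4

section Aux5

variable {H : Type*} [NormedAddCommGroup H] [InnerProductSpace ℂ H] [CompleteSpace H]

local notation "⟪" x ", " y "⟫" => @inner ℂ _ _ x y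

variable {A B : H →ₗ.[ℂ] H} {l m : ℂ} {S R : H →L[ℂ] H}

/-- `(AB)† = B† A†`. -/
theorem adjoint_comp_eq (hdA : Dense (A.domain : Set H)) (hdB : Dense (B.domain : Set H))
    (hdAB : Dense (((A.pComp B).domain : Submodule ℂ H) : Set H))
    (hcA : A.IsClosable) (hR : Res (B.pComp A) m R) :
    (A.pComp B).adjoint = B.adjoint.pComp A.adjoint := by
  obtain ⟨M, hM⟩ := hcA.comp_clm R hR.memA
  have hformal : (B.adjoint.pComp A.adjoint).IsFormalAdjoint (A.pComp B) := by
    intro ζ y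
    have hζA : (ζ : H) ∈ A.adjoint.domain := LinearPMap.pComp_domain_le_right ζ.2
    have hζB : (A.adjoint ⟨(ζ : H), hζA⟩ : H) ∈ B.adjoint.domain :=
      LinearPMap.pComp_mem_snd ζ.2 hζA
    have hy1 : (y : H) ∈ B.domain := LinearPMap.pComp_domain_le_right y.2
    have hy2 : (B ⟨(y : H), hy1⟩ : H) ∈ A.domain := LinearPMap.pComp_mem_snd y.2 hy1
    have e1 : (B.adjoint.pComp A.adjoint) ζ = B.adjoint ⟨A.adjoint ⟨(ζ : H), hζA⟩, hζB⟩ :=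
      LinearPMap.pComp_apply hζA hζB ζ.2
    have e2 : (A.pComp B) y = A ⟨B ⟨(y : H), hy1⟩, hy2⟩ :=
      LinearPMap.pComp_apply hy1 hy2 y.2
    calc ⟪((B.adjoint.pComp A.adjoint) ζ : H), (y : H)⟫
        = ⟪(B.adjoint ⟨A.adjoint ⟨(ζ : H), hζA⟩, hζB⟩ : H),
            ((⟨(y : H), hy1⟩ : B.domain) : H)⟫ := by rw [e1]
      _ = ⟪(A.adjoint ⟨(ζ : H), hζA⟩ : H), (B ⟨(y : H), hy1⟩ : H)⟫ :=
          LinearPMap.adjoint_isFormalAdjoint hdB _ _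
      _ = ⟪(ζ : H), (A ⟨B ⟨(y : H), hy1⟩, hy2⟩ : H)⟫ :=
          LinearPMap.adjoint_isFormalAdjoint hdA ⟨(ζ : H), hζA⟩ ⟨_, hy2⟩
      _ = ⟪(ζ : H), ((A.pComp B) y : H)⟫ := by rw [e2]
  have h1 : B.adjoint.pComp A.adjoint ≤ (A.pComp B).adjoint :=
    LinearPMap.IsFormalAdjoint.le_adjoint hdAB hformal.symm
  have hfa := LinearPMap.adjoint_isFormalAdjoint hdAB
  have h2 : (A.pComp B).adjoint.domain ≤ (B.adjoint.pComp A.adjoint).domain := by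
    intro z hz
    set w : H := (A.pComp B).adjoint ⟨z, hz⟩ with hwdef
    have hw : ∀ y : (A.pComp B).domain, ⟪w, (y : H)⟫ = ⟪z, ((A.pComp B) y : H)⟫ :=
      fun y => hfa ⟨z, hz⟩ y
    have hη : ∀ xx : A.domain, ⟪ContinuousLinearMap.adjoint M w
        - (starRingEnd ℂ) m • ContinuousLinearMap.adjoint M z, (xx : H)⟫ = ⟪z, (A xx : H)⟫ := by
      intro xx
      obtain ⟨hmem, heq⟩ := resI1 hR xx.2
      set a : H := (A ⟨R ↑xx, hR.memA ↑xx⟩ : H) with hadef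
      have hMa : M ↑xx = a := hM ↑xx
      have s1 : ⟪z, ((A.pComp B) ⟨a, hmem⟩ : H)⟫ = ⟪w, a⟫ := (hw ⟨a, hmem⟩).symm
      have s2 : ⟪z, (A ⟨(xx : H), xx.2⟩ : H)⟫ = ⟪w, a⟫ - m * ⟪z, a⟫ := by
        have h3 : (A ⟨(xx : H), xx.2⟩ : H) = ((A.pComp B) ⟨a, hmem⟩ : H) - m • a := by
          rw [heq]; abel
        rw [h3, inner_sub_right, inner_smul_right, s1]
      rw [inner_sub_left, inner_smul_left, ContinuousLinearMap.adjoint_inner_left,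
        ContinuousLinearMap.adjoint_inner_left, hMa, Complex.conj_conj]
      exact s2.symm
    have hzA : z ∈ A.adjoint.domain :=
      LinearPMap.mem_adjoint_domain_of_exists _ ⟨_, hη⟩
    have hAz : (A.adjoint ⟨z, hzA⟩ : H) = ContinuousLinearMap.adjoint M w
        - (starRingEnd ℂ) m • ContinuousLinearMap.adjoint M z :=
      LinearPMap.adjoint_apply_eq hdA ⟨z, hzA⟩ hη
    have hww : ∀ xx : B.domain, ⟪w, (xx : H)⟫ = ⟪(A.adjoint ⟨z, hzA⟩ : H), (B xx : H)⟫ := by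
      intro xx
      obtain ⟨hmem, heq⟩ := resI2 hR xx.2
      set b : H := (B ⟨(xx : H), xx.2⟩ : H) with hbdef
      set a : H := (A ⟨R b, hR.memA b⟩ : H) with hadef
      have hMa : M b = a := hM b
      -- heq : (A.pComp B) ⟨a - ↑xx, hmem⟩ = m • a
      have s1 : ⟪z, ((A.pComp B) ⟨a - (xx : H), hmem⟩ : H)⟫ = ⟪w, a - (xx : H)⟫ :=
        (hw ⟨a - (xx : H), hmem⟩).symm
      have s2 : ⟪w, a⟫ - ⟪w, (xx : H)⟫ = m * ⟪z, a⟫ := by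
        rw [← inner_sub_right, s1.symm, heq, inner_smul_right]
      rw [hAz, inner_sub_left, inner_smul_left, ContinuousLinearMap.adjoint_inner_left,
        ContinuousLinearMap.adjoint_inner_left, hMa, Complex.conj_conj]
      linear_combination -s2
    have hηB : (A.adjoint ⟨z, hzA⟩ : H) ∈ B.adjoint.domain :=
      LinearPMap.mem_adjoint_domain_of_exists _ ⟨w, hww⟩
    exact LinearPMap.mem_pComp_domain.mpr ⟨hzA, hηB⟩
  exact (LinearPMap.eq_of_le_of_domain_eq h1 (le_antisymm h1.1 h2)).symm

/-- The adjoint of a boundedly invertible (after shift) operator. -/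
theorem Res.adjoint_res {T : H →ₗ.[ℂ] H} {l : ℂ} {S : H →L[ℂ] H}
    (hd : Dense (T.domain : Set H)) (hS : Res T l S) :
    Res T.adjoint ((starRingEnd ℂ) l) (ContinuousLinearMap.adjoint S) := by
  have hST : ∀ x : T.domain, S (T x) = (x : H) + l • S (x : H) := by
    intro x
    have h2 := hS.2 (x : H) x.2
    have h3 : S (T x) = S ((T ⟨(x : H), x.2⟩ : H) - l • (x : H)) + l • S (x : H) := by
      rw [← _root_.map_smul S, ← _root_.map_add]
      congr 1
      abel
    rw [h3, h2]
  constructor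
  · intro y
    have hmemw : ∀ x : T.domain,
        ⟪y + (starRingEnd ℂ) l • (ContinuousLinearMap.adjoint S) y, (x : H)⟫
          = ⟪(ContinuousLinearMap.adjoint S) y, (T x : H)⟫ := by
      intro x
      rw [ContinuousLinearMap.adjoint_inner_left, hST x, inner_add_right, inner_smul_right,
        inner_add_left, inner_smul_left, Complex.conj_conj, ContinuousLinearMap.adjoint_inner_left]
    have hy : (ContinuousLinearMap.adjoint S) y ∈ T.adjoint.domain :=
      LinearPMap.mem_adjoint_domain_of_exists _ ⟨_, hmemw⟩
    exact ⟨hy, LinearPMap.adjoint_apply_eq hd ⟨_, hy⟩ hmemw⟩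
  · intro ζ hζ
    apply ext_inner_right ℂ
    intro v
    rw [ContinuousLinearMap.adjoint_inner_left, inner_sub_left, inner_smul_left,
      Complex.conj_conj]
    have h3 : ⟪(T.adjoint ⟨ζ, hζ⟩ : H), S v⟫ = ⟪ζ, (T ⟨S v, hS.mem_domain v⟩ : H)⟫ :=
      LinearPMap.adjoint_isFormalAdjoint hd ⟨ζ, hζ⟩ ⟨S v, hS.mem_domain v⟩
    rw [h3, hS.eq_apply v, inner_add_right, inner_smul_right]
    ring

theorem Res.dense_adjoint {T : H →ₗ.[ℂ] H} {l : ℂ} {S : H →L[ℂ] H}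
    (hd : Dense (T.domain : Set H)) (hS : Res T l S) :
    Dense ((T.adjoint.domain : Submodule ℂ H) : Set H) := by
  rw [Submodule.dense_iff_topologicalClosure_eq_top, Submodule.topologicalClosure_eq_top_iff,
    Submodule.eq_bot_iff]
  intro z hz
  have hzp : ∀ u ∈ T.adjoint.domain, ⟪u, z⟫ = 0 := (Submodule.mem_orthogonal _ z).mp hz
  have hadj := hS.adjoint_res hd
  have hSz : S z = 0 := by
    have h1 := hzp _ (hadj.mem_domain (S z))
    rw [ContinuousLinearMap.adjoint_inner_left] at h1
    exact inner_self_eq_zero.mp h1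
  obtain ⟨hm0, he0⟩ := hS.1 z
  have hzero : (⟨S z, hm0⟩ : T.domain) = 0 := Subtype.ext (by simp [hSz])
  rw [hzero, LinearPMap.map_zero, hSz, smul_zero, add_zero] at he0
  exact he0.symm

theorem res_bidual {T : H →ₗ.[ℂ] H} {l : ℂ} {S : H →L[ℂ] H}
    (hd : Dense (T.domain : Set H)) (hS : Res T l S) :
    T.adjoint.adjoint = T := by
  have hd' := hS.dense_adjoint hd
  have hadj := hS.adjoint_res hd
  have hadj2 := hadj.adjoint_res hd'
  rw [Complex.conj_conj, ContinuousLinearMap.adjoint_adjoint] at hadj2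
  have hle : T ≤ T.adjoint.adjoint :=
    LinearPMap.IsFormalAdjoint.le_adjoint hd' (LinearPMap.adjoint_isFormalAdjoint hd)
  have hdom : T.adjoint.adjoint.domain ≤ T.domain := by
    intro x hx
    have h2 := hadj2.2 x hx
    rw [← h2]
    exact hS.mem_domain _
  exact (LinearPMap.eq_of_le_of_domain_eq hle (le_antisymm hle.1 hdom)).symm

end Aux5


/-- if `σ(AB) ≠ ℂ` and `σ(BA) ≠ ℂ` for densely defined closable `A, B`, then
`A, B, AB, BA` are closed, `AB` and `BA` are densely defined, `(AB)* = B*A*`,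
`(BA)* = A*B*`, `(A*B*)* = BA` and `(B*A*)* = AB`. -/
theorem statement_3 {H : Type*} [NormedAddCommGroup H] [InnerProductSpace ℂ H] [CompleteSpace H]
    (A B : H →ₗ.[ℂ] H)
    (hdA : Dense (A.domain : Set H)) (hdB : Dense (B.domain : Set H))
    (hcA : A.IsClosable) (hcB : B.IsClosable)
    (hsAB : (A.pComp B).pSpectrum ≠ Set.univ) (hsBA : (B.pComp A).pSpectrum ≠ Set.univ) :
    A.IsClosed ∧ B.IsClosed ∧
      Dense ((A.pComp B).domain : Set H) ∧ Dense ((B.pComp A).domain : Set H) ∧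
      (A.pComp B).IsClosed ∧ (B.pComp A).IsClosed ∧
      (A.pComp B).adjoint = B.adjoint.pComp A.adjoint ∧
      (B.pComp A).adjoint = A.adjoint.pComp B.adjoint ∧
      (A.adjoint.pComp B.adjoint).adjoint = B.pComp A ∧
      (B.adjoint.pComp A.adjoint).adjoint = A.pComp B := by
  obtain ⟨l, S, hl, hS⟩ := exists_res_ne_zero hsAB
  obtain ⟨m, R, hm, hR⟩ := exists_res_ne_zero hsBA
  have hdenseAB := dense_comp hdA hdB hcA hR
  have hdenseBA := dense_comp hdB hdA hcB hS
  have hadjAB := adjoint_comp_eq hdA hdB hdenseAB hcA hR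
  have hadjBA := adjoint_comp_eq hdB hdA hdenseBA hcB hS
  refine ⟨closed_left hcA hcB hS hR hl, closed_left hcB hcA hR hS hm,
    hdenseAB, hdenseBA, hS.isClosed, hR.isClosed, hadjAB, hadjBA, ?_, ?_⟩
  · rw [← hadjBA]
    exact res_bidual hdenseBA hR
  · rw [← hadjAB]
    exact res_bidual hdenseAB hS
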